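/- arXiv:2204.10723 — 2 statements merged into one kernel-verified Lean document; each statement's English description precedes it below -/
import Mathlib

section
/- Under the matrix-scaled consensus dynamics ẋᵢ = sign(Sᵢ)·Σ_{j∈Nᵢ}(Sⱼxⱼ − Sᵢxᵢ) on a connected undirected graph, with each Sᵢ positive or negative definite, the virtual consensus point x^a(t) = (Σᵢ |Sᵢ⁻¹|)⁻¹ · Σᵢ sign(Sᵢ)·xᵢ(t) is time-invariant: d x^a/dt = 0 along every solution. -/
open Matrix
open scoped Classical

def MPosDef {d : ℕ} (A : Matrix (Fin d) (Fin d) ℝ) : Prop :=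
  ∀ x : Fin d → ℝ, x ≠ 0 → 0 < x ⬝ᵥ A.mulVec x

def MNegDef {d : ℕ} (A : Matrix (Fin d) (Fin d) ℝ) : Prop :=
  ∀ x : Fin d → ℝ, x ≠ 0 → x ⬝ᵥ A.mulVec x < 0

noncomputable def msign {d : ℕ} (A : Matrix (Fin d) (Fin d) ℝ) : ℝ :=
  if MPosDef A then 1 else -1

lemma msign_sq {d : ℕ} (A : Matrix (Fin d) (Fin d) ℝ) : msign A * msign A = 1 := by
  unfold msign; split_ifs <;> norm_num

theorem stmt13 {n d : ℕ} (G : SimpleGraph (Fin n)) [DecidableRel G.Adj]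
    (hconn : G.Connected)
    (S : Fin n → Matrix (Fin d) (Fin d) ℝ)
    (hS : ∀ i, MPosDef (S i) ∨ MNegDef (S i))
    (x : ℝ → Fin n → (Fin d → ℝ))
    (hx : ∀ i t, HasDerivAt (fun t => x t i)
      (msign (S i) • ∑ j ∈ G.neighborFinset i,
        ((S j).mulVec (x t j) - (S i).mulVec (x t i))) t) :
    ∀ t : ℝ,
      (∑ i : Fin n, msign ((S i)⁻¹) • (S i)⁻¹)⁻¹.mulVec
          (∑ i : Fin n, msign (S i) • x t i) =
      (∑ i : Fin n, msign ((S i)⁻¹) • (S i)⁻¹)⁻¹.mulVec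
          (∑ i : Fin n, msign (S i) • x 0 i) := by
  set F : ℝ → (Fin d → ℝ) := fun t => ∑ i : Fin n, msign (S i) • x t i with hF
  have key : ∀ t : ℝ,
      (∑ i : Fin n, ∑ j ∈ G.neighborFinset i,
        ((S j).mulVec (x t j) - (S i).mulVec (x t i))) = 0 := by
    intro t
    set v : Fin n → (Fin d → ℝ) := fun i => (S i).mulVec (x t i) with hv
    have hrw : ∀ i : Fin n, (∑ j ∈ G.neighborFinset i, (v j - v i)) =
        ∑ j : Fin n, if G.Adj i j then (v j - v i) else 0 := by
      intro i
      rw [← Finset.sum_filter]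
      apply Finset.sum_congr _ (fun _ _ => rfl)
      ext j
      simp [SimpleGraph.mem_neighborFinset]
    change (∑ i : Fin n, ∑ j ∈ G.neighborFinset i, (v j - v i)) = 0
    simp_rw [hrw]
    have hA : (∑ i : Fin n, ∑ j : Fin n, if G.Adj i j then (v j - v i) else 0)
        = -(∑ i : Fin n, ∑ j : Fin n, if G.Adj i j then (v j - v i) else 0) := by
      conv_lhs => rw [Finset.sum_comm]
      rw [← Finset.sum_neg_distrib]
      refine Finset.sum_congr rfl fun i _ => ?_
      rw [← Finset.sum_neg_distrib]
      refine Finset.sum_congr rfl fun j _ => ?_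
      by_cases h : G.Adj i j
      · rw [if_pos (G.adj_symm h), if_pos h, neg_sub]
      · rw [if_neg (fun hc => h (G.adj_symm hc)), if_neg h, neg_zero]
    funext k
    have hk := congrFun hA k
    simp only [Pi.neg_apply] at hk
    simp only [Pi.zero_apply]
    linarith
  have hd : ∀ t : ℝ, HasDerivAt F 0 t := by
    intro t
    have := HasDerivAt.fun_sum (u := (Finset.univ : Finset (Fin n)))
      (fun i _ => ((hx i t).const_smul (msign (S i))))
    convert this using 1
    · rfl
    · rfl
    · rfl
    · rfl
    rw [eq_comm]
    calc ∑ i : Fin n, msign (S i) • msign (S i) • ∑ j ∈ G.neighborFinset i,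
          ((S j).mulVec (x t j) - (S i).mulVec (x t i))
        = ∑ i : Fin n, ∑ j ∈ G.neighborFinset i,
          ((S j).mulVec (x t j) - (S i).mulVec (x t i)) := by
          refine Finset.sum_congr rfl fun i _ => ?_
          rw [smul_smul, msign_sq, one_smul]
      _ = 0 := key t
  have hdiff : Differentiable ℝ F := fun t => (hd t).differentiableAt
  have hderiv : ∀ t, deriv F t = 0 := fun t => (hd t).deriv
  intro t
  have hFt : F t = F 0 := is_const_of_deriv_eq_zero hdiff hderiv t 0
  simp only [hF] at hFt
  rw [hFt]
end

section
/- Let μ = a + bi ∈ ℂ with a > 0 and let α > 0 satisfy a > b²/α². Then both roots of s² + αs + μ have strictly negative real part. -/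
theorem stmt17 (a b α : ℝ) (ha : 0 < a) (hα : 0 < α) (h : a > b ^ 2 / α ^ 2) :
    ∀ s : ℂ, s ^ 2 + (α : ℂ) * s + ((a : ℂ) + (b : ℂ) * Complex.I) = 0 → s.re < 0 := by
  have hb : b ^ 2 < a * α ^ 2 := by
    rw [gt_iff_lt, div_lt_iff₀ (by positivity)] at h
    linarith
  intro s hs
  by_contra hx
  push_neg at hx
  have h1 := congrArg Complex.re hs
  have h2 := congrArg Complex.im hs
  simp [pow_two, Complex.mul_re, Complex.mul_im] at h1 h2
  have hb' : b = -((2 * s.re + α) * s.im) := by linarith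
  have hy : s.im * s.im = s.re * s.re + α * s.re + a := by linarith
  rw [hb'] at hb
  nlinarith [hy, hx, hα.le, ha.le, sq_nonneg s.re, mul_nonneg hx hα.le,
    mul_nonneg (mul_nonneg hx hx) hx, mul_nonneg (mul_nonneg hx hx) (mul_nonneg hx hx),
    mul_nonneg (mul_nonneg hx hx) ha.le, mul_nonneg (mul_nonneg hx hα.le) ha.le,
    mul_nonneg (mul_nonneg (mul_nonneg hx hx) hx) hα.le,
    mul_nonneg (mul_nonneg hx hx) (mul_pos hα hα).le,
    mul_nonneg hx (mul_pos (mul_pos hα hα) hα).le]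
end
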